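/- arXiv:1712.07409 — 3 statements merged into one kernel-verified Lean document; each statement's English description precedes it below -/
import Mathlib

section
/- The determinant of the (k+1)×(k+1) tridiagonal matrix B_k with diagonal entries all equal to 2, first superdiagonal entry 1 and last subdiagonal entry 1, and all other superdiagonal entries -1 and all other subdiagonal entries -1 (i.e., B_k[0][1]=1, B_k[k][k-1]=1, B_k[i][i+1]=-1 for 1≤i≤k-1, B_k[i][i-1]=-1 for 1≤i≤k-1, B_k[i][i]=2 for all i), equals 9k-6 for every integer k > 0. -/
open Matrix

def Em (n : ℕ) : Matrix (Fin n) (Fin n) ℤ :=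
  Matrix.of fun i j =>
    if (i:ℕ) = j then 2
    else if (i:ℕ) = (j:ℕ) + 1 then (if (i:ℕ) = n - 1 then 1 else -1)
    else if (j:ℕ) = (i:ℕ) + 1 then -1
    else 0

lemma det_row_single {n : ℕ} (M : Matrix (Fin (n+1)) (Fin (n+1)) ℤ)
    (h : ∀ j, j ≠ 0 → M 0 j = 0) :
    M.det = M 0 0 * (M.submatrix Fin.succ Fin.succ).det := by
  rw [Matrix.det_succ_row_zero, Finset.sum_eq_single 0]
  · simp [Fin.succAbove_zero]
  · intro j _ hj; rw [h j hj]; ring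
  · intro h'; exact absurd (Finset.mem_univ _) h'

lemma det_col_two {n : ℕ} (M : Matrix (Fin (n+2)) (Fin (n+2)) ℤ)
    (h : ∀ i : Fin (n+2), 1 < (i:ℕ) → M i 0 = 0) :
    M.det = M 0 0 * (M.submatrix Fin.succ Fin.succ).det
      - M 1 0 * (M.submatrix (Fin.succAbove 1) Fin.succ).det := by
  rw [Matrix.det_succ_column_zero, Fin.sum_univ_succ, Fin.sum_univ_succ,
    Finset.sum_eq_zero (fun i _ => by
      rw [h i.succ.succ (by simp only [Fin.val_succ]; omega)]; ring)]
  simp [Fin.succAbove_zero, Fin.succ_zero_eq_one]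
  ring

lemma succAbove_one_succ {n : ℕ} (i : Fin (n+1)) :
    (((1 : Fin (n+3)).succAbove i.succ) : ℕ) = (i : ℕ) + 2 := by
  rw [Fin.succAbove_of_le_castSucc]
  · simp only [Fin.val_succ]
  · rw [Fin.le_def]; simp only [Fin.coe_castSucc, Fin.val_succ, Fin.val_one]; omega

lemma succAbove_one_zero {n : ℕ} :
    (((1 : Fin (n+3)).succAbove (0 : Fin (n+2))) : ℕ) = 0 := by
  rw [Fin.succAbove_of_castSucc_lt]
  · simp only [Fin.coe_castSucc, Fin.val_zero]
  · rw [Fin.lt_def]; simp only [Fin.coe_castSucc, Fin.val_zero, Fin.val_one]; omega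

lemma Em_rec (n : ℕ) :
    (Em (n+3)).det = 2 * (Em (n+2)).det - (Em (n+1)).det := by
  rw [det_col_two _ (fun i hi => by
      simp only [Em, Matrix.of_apply, Fin.val_zero]
      split_ifs <;> first | omega | simp_all)]
  have h1 : (Em (n+3)).submatrix Fin.succ Fin.succ = Em (n+2) := by
    ext i j
    simp only [Em, Matrix.submatrix_apply, Matrix.of_apply, Fin.val_succ]
    split_ifs <;> first | omega | simp_all
  have h2 : ((Em (n+3)).submatrix (Fin.succAbove 1) Fin.succ).det
      = -1 * (Em (n+1)).det := by
    rw [det_row_single _ (fun j hj => by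
        have hj' : (j:ℕ) ≠ 0 := fun h => hj (Fin.ext h)
        simp only [Em, Matrix.submatrix_apply, Matrix.of_apply, Fin.val_succ,
          succAbove_one_zero]
        split_ifs <;> first | omega | simp_all)]
    have h3 : ((Em (n+3)).submatrix (Fin.succAbove 1) Fin.succ).submatrix Fin.succ Fin.succ
        = Em (n+1) := by
      ext i j
      simp only [Em, Matrix.submatrix_apply, Matrix.of_apply, Fin.val_succ,
        succAbove_one_succ]
      split_ifs <;> first | omega | simp_all
    have h4 : ((Em (n+3)).submatrix (Fin.succAbove 1) Fin.succ) 0 0 = -1 := by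
      simp only [Em, Matrix.submatrix_apply, Matrix.of_apply, Fin.val_succ,
        succAbove_one_zero, Fin.val_zero]
      norm_num
    rw [h3, h4]
  have e00 : Em (n+3) 0 0 = 2 := by simp [Em]
  have e10 : Em (n+3) 1 0 = -1 := by
    simp only [Em, Matrix.of_apply, Fin.val_zero, Fin.val_one]
    split_ifs <;> first | omega | simp_all
  rw [h1, h2, e00, e10]; ring

lemma Em_det (n : ℕ) : (Em (n+1)).det = 3 * n + 2 := by
  induction n using Nat.twoStepInduction with
  | zero => simp [Em, Matrix.det_fin_one]
  | one =>
    rw [show (Em 2) = !![2, -1; 1, 2] by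
      ext i j; fin_cases i <;> fin_cases j <;> simp [Em]]
    simp [Matrix.det_fin_two]
  | more n ih1 ih2 =>
    rw [Em_rec, ih1, ih2]; push_cast; ring

set_option maxHeartbeats 1000000 in
theorem stmt0 (k : ℕ) (hk : 0 < k) :
    Matrix.det (Matrix.of (fun i j : Fin (k+1) =>
      if i.val = j.val then (2 : ℤ)
      else if i.val = 0 ∧ j.val = 1 then 1
      else if i.val = k ∧ j.val = k - 1 then 1
      else if j.val = i.val + 1 then -1
      else if i.val = j.val + 1 then -1
      else 0)) = 9 * k - 6 := by
  match k, hk with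
  | 1, _ =>
    rw [show (Matrix.of (fun i j : Fin 2 =>
      if i.val = j.val then (2 : ℤ)
      else if i.val = 0 ∧ j.val = 1 then 1
      else if i.val = 1 ∧ j.val = 0 then 1
      else if j.val = i.val + 1 then -1
      else if i.val = j.val + 1 then -1
      else 0)) = !![2, 1; 1, 2] by
        ext i j; fin_cases i <;> fin_cases j <;> norm_num]
    simp [Matrix.det_fin_two]
  | (m+2), _ =>
    set M : Matrix (Fin (m+3)) (Fin (m+3)) ℤ := Matrix.of (fun i j : Fin (m+3) =>
      if i.val = j.val then (2 : ℤ)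
      else if i.val = 0 ∧ j.val = 1 then 1
      else if i.val = m+2 ∧ j.val = m+2 - 1 then 1
      else if j.val = i.val + 1 then -1
      else if i.val = j.val + 1 then -1
      else 0) with hM
    rw [det_col_two M (fun i hi => by
      simp only [hM, Matrix.of_apply, Fin.val_zero]
      split_ifs <;> first | omega | simp_all)]
    have h1 : M.submatrix Fin.succ Fin.succ = Em (m+2) := by
      ext i j
      simp only [hM, Em, Matrix.submatrix_apply, Matrix.of_apply, Fin.val_succ]
      split_ifs <;> first | omega | simp_all
    have h2 : (M.submatrix (Fin.succAbove 1) Fin.succ).det = 1 * (Em (m+1)).det := by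
      rw [det_row_single _ (fun j hj => by
        have hj' : (j:ℕ) ≠ 0 := fun h => hj (Fin.ext h)
        simp only [hM, Matrix.submatrix_apply, Matrix.of_apply, Fin.val_succ,
          succAbove_one_zero]
        split_ifs <;> first | omega | simp_all)]
      have h3 : (M.submatrix (Fin.succAbove 1) Fin.succ).submatrix Fin.succ Fin.succ
          = Em (m+1) := by
        ext i j
        simp only [hM, Em, Matrix.submatrix_apply, Matrix.of_apply, Fin.val_succ,
          succAbove_one_succ]
        split_ifs <;> first | omega | simp_all
      have h4 : (M.submatrix (Fin.succAbove 1) Fin.succ) 0 0 = 1 := by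
        simp only [hM, Matrix.submatrix_apply, Matrix.of_apply, Fin.val_succ,
          succAbove_one_zero, Fin.val_zero]
        split_ifs <;> first | omega | simp_all
      rw [h3, h4]
    have e00 : M 0 0 = 2 := by
      simp only [hM, Matrix.of_apply, Fin.val_zero]; norm_num
    have e10 : M 1 0 = -1 := by
      simp only [hM, Matrix.of_apply, Fin.val_zero, Fin.val_one]
      split_ifs <;> first | omega | simp_all
    rw [h1, h2, e00, e10, Em_det, Em_det]
    push_cast; ring
end

section
/- The piecewise linear map F^∞ : ℝ² → ℝ² given by F^∞(α_0, α_1) = (min(α_0, 2α_0+α_1), min(α_1, α_0+2α_1)) is bijective. -/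
theorem stmt9 :
    Function.Bijective (fun α : ℝ × ℝ =>
      (min α.1 (2 * α.1 + α.2), min α.2 (α.1 + 2 * α.2))) := by
  refine Function.bijective_iff_has_inverse.mpr
    ⟨fun β => if 0 ≤ β.1 + β.2 then β else ((2*β.1 - β.2)/3, (2*β.2 - β.1)/3), ?_, ?_⟩
  · intro α
    dsimp only
    rcases le_total (α.1 + α.2) 0 with h | h
    · have h1 : min α.1 (2 * α.1 + α.2) = 2 * α.1 + α.2 := min_eq_right (by linarith)
      have h2 : min α.2 (α.1 + 2 * α.2) = α.1 + 2 * α.2 := min_eq_right (by linarith)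
      simp only [h1, h2]
      split_ifs with hs
      · have : α.1 + α.2 = 0 := by linarith
        ext <;> simp <;> linarith
      · ext <;> simp <;> ring
    · have h1 : min α.1 (2 * α.1 + α.2) = α.1 := min_eq_left (by linarith)
      have h2 : min α.2 (α.1 + 2 * α.2) = α.2 := min_eq_left (by linarith)
      simp only [h1, h2]
      rw [if_pos (by linarith)]
  · intro β
    dsimp only
    rcases le_total 0 (β.1 + β.2) with h | h
    · rw [if_pos h]
      have h1 : min β.1 (2 * β.1 + β.2) = β.1 := min_eq_left (by linarith)
      have h2 : min β.2 (β.1 + 2 * β.2) = β.2 := min_eq_left (by linarith)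
      simp [h1, h2]
    · by_cases hz : 0 ≤ β.1 + β.2
      · have h0 : β.1 + β.2 = 0 := le_antisymm h hz
        rw [if_pos hz]
        have h1 : min β.1 (2 * β.1 + β.2) = β.1 := min_eq_left (by linarith)
        have h2 : min β.2 (β.1 + 2 * β.2) = β.2 := min_eq_left (by linarith)
        simp [h1, h2]
      · rw [if_neg hz]
        dsimp only
        have hs : (2*β.1 - β.2)/3 + (2*β.2 - β.1)/3 ≤ 0 := by linarith
        have h1 : min ((2*β.1 - β.2)/3) (2 * ((2*β.1 - β.2)/3) + (2*β.2 - β.1)/3) = β.1 := by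
          rw [min_eq_right (by linarith)]; ring
        have h2 : min ((2*β.2 - β.1)/3) ((2*β.1 - β.2)/3 + 2 * ((2*β.2 - β.1)/3)) = β.2 := by
          rw [min_eq_right (by linarith)]; ring
        rw [h1, h2]
end

section
/- For the recession function F^∞ : ℝ^{d+1} → ℝ^{d+1} with components (F^∞(α))_0 = min{α_0, 2α_0+α_1}, (F^∞(α))_i = min{α_i, α_{i-1}+2α_i, 2α_i+α_{i+1}, -α_{i-1}+2α_i-α_{i+1}} (1 ≤ i ≤ d-1), (F^∞(α))_d = min{α_d, α_{d-1}+2α_d}, one has F^∞(α) ≠ -α for every nonzero α ∈ ℝ^{d+1}. -/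
/-- The recession function `F_d^∞ : ℝ^{d+1} → ℝ^{d+1}`. -/
noncomputable def recessionFn (d : ℕ) (α : Fin (d + 1) → ℝ) : Fin (d + 1) → ℝ :=
  fun i =>
    if i.val = 0 then min (α i) (2 * α i + α (i + 1))
    else if i.val = d then min (α i) (α (i - 1) + 2 * α i)
    else min (min (α i) (α (i - 1) + 2 * α i))
             (min (2 * α i + α (i + 1)) (-α (i - 1) + 2 * α i - α (i + 1)))

theorem stmt11 (d : ℕ) (hd : 1 ≤ d) (α : Fin (d + 1) → ℝ) (hα : α ≠ 0) :
    recessionFn d α ≠ -α := by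
  intro h
  have hcomp : ∀ i, recessionFn d α i = -α i := fun i => congrFun h i
  have hpos : ∀ i, 0 ≤ α i := by
    intro i
    have h1 := hcomp i
    have h2 : recessionFn d α i ≤ α i := by
      unfold recessionFn
      split_ifs
      · exact min_le_left _ _
      · exact min_le_left _ _
      · exact le_trans (min_le_left _ _) (min_le_left _ _)
    rw [h1] at h2
    linarith
  obtain ⟨i, hi⟩ := Finite.exists_max α
  have hi0 : α i = 0 := by
    have h1 := hcomp i
    unfold recessionFn at h1
    split_ifs at h1
    · have h0 : 0 ≤ min (α i) (2 * α i + α (i + 1)) :=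
        le_min (hpos i) (by linarith [hpos i, hpos (i + 1)])
      rw [h1] at h0
      linarith [hpos i]
    · have h0 : 0 ≤ min (α i) (α (i - 1) + 2 * α i) :=
        le_min (hpos i) (by linarith [hpos i, hpos (i - 1)])
      rw [h1] at h0
      linarith [hpos i]
    · have h0 : 0 ≤ min (min (α i) (α (i - 1) + 2 * α i))
          (min (2 * α i + α (i + 1)) (-α (i - 1) + 2 * α i - α (i + 1))) := by
        refine le_min (le_min (hpos i) (by linarith [hpos i, hpos (i - 1)]))
          (le_min (by linarith [hpos i, hpos (i + 1)]) ?_)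
        have h2 := hi (i - 1)
        have h3 := hi (i + 1)
        linarith [hpos i]
      rw [h1] at h0
      linarith [hpos i]
  refine hα (funext fun j => ?_)
  have h2 : α j ≤ 0 := hi0 ▸ hi j
  simpa using le_antisymm h2 (hpos j)
end
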